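/- Let p be a probability measure on (X_a,𝒳_a)⊗(X_b,𝒳_b)⊗(Y,𝒴)⊗(Λ,ℒ) satisfying weak determinism: for all J_a ∈ 𝒳_a, J_b ∈ 𝒳_b, p[J_a × J_b‖𝒴⊗ℒ] ∈ {0,1} p-almost surely. Then p satisfies outcome independence: p[J_a × J_b‖𝒴⊗ℒ] = p[J_a‖𝒴⊗ℒ]·p[J_b‖𝒴⊗ℒ] p-almost surely. -/

import Mathlib

open MeasureTheory

private lemma indicator_ae_eq_condexp_of_zero_one {α : Type*} {m m0 : MeasurableSpace α}
    (hm : m ≤ m0) (μ : @Measure α m0) [IsProbabilityMeasure μ] {A : Set α}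
    (hA : MeasurableSet A)
    (h01 : ∀ᵐ ω ∂μ, (μ[A.indicator (fun _ => (1:ℝ))|m]) ω ∈ ({0, 1} : Set ℝ)) :
    A.indicator (fun _ => (1:ℝ)) =ᵐ[μ] μ[A.indicator (fun _ => (1:ℝ))|m] := by
  set g := μ[A.indicator (fun _ => (1:ℝ))|m] with hg
  have hgm : StronglyMeasurable[m] g := stronglyMeasurable_condExp
  have hSm : MeasurableSet[m] (g ⁻¹' {(1:ℝ)}) :=
    hgm.measurable (measurableSet_singleton 1)
  set S : Set α := g ⁻¹' {(1:ℝ)} with hS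
  have hS0 : MeasurableSet S := hm _ hSm
  have hint : Integrable (A.indicator (fun _ => (1:ℝ))) μ :=
    (integrable_const (1:ℝ)).indicator hA
  -- integral of indicator over a set
  have hind : ∀ T : Set α, MeasurableSet T →
      ∫ x in T, A.indicator (fun _ => (1:ℝ)) x ∂μ = (μ (T ∩ A)).toReal := by
    intro T hT
    rw [setIntegral_indicator hA]
    simp [Measure.restrict_apply hT]
    rfl
  -- on S
  have h1 : μ (S \ A) = 0 := by
    have e1 : ∫ x in S, A.indicator (fun _ => (1:ℝ)) x ∂μ = ∫ x in S, g x ∂μ :=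
      (setIntegral_condExp hm hint hSm).symm
    have e2 : ∫ x in S, g x ∂μ = (μ S).toReal := by
      rw [setIntegral_congr_fun hS0 (fun x hx => hx), setIntegral_const]
      simp
      rfl
    have e3 : (μ (S ∩ A)).toReal = (μ S).toReal := by
      rw [← hind S hS0, e1, e2]
    have e4 : μ (S ∩ A) = μ S := by
      have := (ENNReal.toReal_eq_toReal_iff' (measure_ne_top μ _) (measure_ne_top μ _)).mp e3
      exact this
    have : μ (S \ (S ∩ A)) = 0 := by
      rw [measure_diff Set.inter_subset_left (hS0.inter hA).nullMeasurableSet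
        (measure_ne_top μ _), e4, tsub_self]
    simpa [Set.diff_inter_self_eq_diff] using this
  -- on Sᶜ
  have h2 : μ (A \ S) = 0 := by
    have e1 : ∫ x in Sᶜ, A.indicator (fun _ => (1:ℝ)) x ∂μ = ∫ x in Sᶜ, g x ∂μ :=
      (setIntegral_condExp hm hint hSm.compl).symm
    have e2 : ∫ x in Sᶜ, g x ∂μ = 0 := by
      have : ∀ᵐ x ∂(μ.restrict Sᶜ), g x = 0 := by
        filter_upwards [ae_restrict_of_ae h01, ae_restrict_mem hS0.compl] with x hx hxS
        rcases hx with hx | hx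
        · exact hx
        · exact absurd hx hxS
      rw [integral_congr_ae this]
      simp
    have e3 : (μ (Sᶜ ∩ A)).toReal = 0 := by
      rw [← hind Sᶜ hS0.compl, e1, e2]
    have e4 : μ (Sᶜ ∩ A) = 0 := by
      exact (ENNReal.toReal_eq_zero_iff _).mp e3 |>.resolve_right (measure_ne_top μ _)
    simpa [Set.inter_comm, Set.diff_eq] using e4
  filter_upwards [h01, measure_eq_zero_iff_ae_notMem.mp h1, measure_eq_zero_iff_ae_notMem.mp h2]
    with x hx hx1 hx2
  by_cases hxA : x ∈ A
  · have hxS : x ∈ S := by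
      by_contra h
      exact hx2 ⟨hxA, h⟩
    have hgx : g x = 1 := hxS
    simp [Set.indicator_of_mem hxA, hgx]
  · have hxS : x ∉ S := fun h => hx1 ⟨h, hxA⟩
    have : g x = 0 := by
      rcases hx with hx | hx
      · exact hx
      · exact absurd hx hxS
    simp [Set.indicator_of_notMem hxA, this]

theorem stmt_13 {Xa Xb Ya Yb Λ : Type*}
    [MeasurableSpace Xa] [MeasurableSpace Xb] [MeasurableSpace Ya] [MeasurableSpace Yb]
    [MeasurableSpace Λ]
    (p : Measure (Xa × Xb × (Ya × Yb) × Λ)) [IsProbabilityMeasure p]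
    (mYL : MeasurableSpace (Xa × Xb × (Ya × Yb) × Λ))
    (hYL : mYL = MeasurableSpace.comap (fun ω => ω.2.2) inferInstance)
    -- weak determinism
    (hWD : ∀ (Ja : Set Xa) (Jb : Set Xb), MeasurableSet Ja → MeasurableSet Jb →
      ∀ᵐ ω ∂p,
        (p[Set.indicator {w : Xa × Xb × (Ya × Yb) × Λ | w.1 ∈ Ja ∧ w.2.1 ∈ Jb}
            (fun _ => (1 : ℝ)) | mYL]) ω ∈ ({0, 1} : Set ℝ)) :
    -- outcome independence
    ∀ (Ja : Set Xa) (Jb : Set Xb), MeasurableSet Ja → MeasurableSet Jb →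
      p[Set.indicator {w : Xa × Xb × (Ya × Yb) × Λ | w.1 ∈ Ja ∧ w.2.1 ∈ Jb}
          (fun _ => (1 : ℝ)) | mYL]
        =ᵐ[p]
      (fun ω =>
        (p[Set.indicator {w : Xa × Xb × (Ya × Yb) × Λ | w.1 ∈ Ja} (fun _ => (1 : ℝ)) | mYL]) ω *
        (p[Set.indicator {w : Xa × Xb × (Ya × Yb) × Λ | w.2.1 ∈ Jb} (fun _ => (1 : ℝ)) | mYL]) ω) := by
  intro Ja Jb hJa hJb
  have hm : mYL ≤ (Prod.instMeasurableSpace : MeasurableSpace (Xa × Xb × (Ya × Yb) × Λ)) := by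
    rw [hYL]
    exact (measurable_snd.comp measurable_snd).comap_le
  set A : Set (Xa × Xb × (Ya × Yb) × Λ) := {w | w.1 ∈ Ja} with hAdef
  set B : Set (Xa × Xb × (Ya × Yb) × Λ) := {w | w.2.1 ∈ Jb} with hBdef
  have hA : MeasurableSet[Prod.instMeasurableSpace] A := measurable_fst hJa
  have hB : MeasurableSet[Prod.instMeasurableSpace] B := (measurable_fst.comp measurable_snd) hJb
  have hWDa := hWD Ja Set.univ hJa MeasurableSet.univ
  have hWDb := hWD Set.univ Jb MeasurableSet.univ hJb
  simp only [Set.mem_univ, and_true, true_and] at hWDa hWDb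
  have ha : A.indicator (fun _ => (1:ℝ)) =ᵐ[p] p[A.indicator (fun _ => (1:ℝ))|mYL] :=
    indicator_ae_eq_condexp_of_zero_one (m0 := Prod.instMeasurableSpace) hm p hA hWDa
  have hb : B.indicator (fun _ => (1:ℝ)) =ᵐ[p] p[B.indicator (fun _ => (1:ℝ))|mYL] :=
    indicator_ae_eq_condexp_of_zero_one (m0 := Prod.instMeasurableSpace) hm p hB hWDb
  set ga := p[A.indicator (fun _ => (1:ℝ))|mYL]
  set gb := p[B.indicator (fun _ => (1:ℝ))|mYL]
  have hAB : ({w : Xa × Xb × (Ya × Yb) × Λ | w.1 ∈ Ja ∧ w.2.1 ∈ Jb}) = A ∩ B := rfl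
  have hprod : Set.indicator {w : Xa × Xb × (Ya × Yb) × Λ | w.1 ∈ Ja ∧ w.2.1 ∈ Jb} (fun _ => (1:ℝ))
      =ᵐ[p] fun ω => ga ω * gb ω := by
    filter_upwards [ha, hb] with ω h1 h2
    rw [hAB, ← h1, ← h2]
    by_cases hωA : ω ∈ A <;> by_cases hωB : ω ∈ B <;>
      simp [Set.indicator_apply, hωA, hωB]
  have hgm : StronglyMeasurable[mYL] (fun ω => ga ω * gb ω) :=
    stronglyMeasurable_condExp.mul stronglyMeasurable_condExp
  have hint : Integrable (fun ω => ga ω * gb ω) p := by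
    refine Integrable.mono' (integrable_const (1:ℝ))
      ((hgm.mono hm).aestronglyMeasurable) ?_
    filter_upwards [hWDa, hWDb] with ω h1 h2
    have habs : ‖ga ω * gb ω‖ = |ga ω| * |gb ω| := abs_mul _ _
    show ‖ga ω * gb ω‖ ≤ 1
    rw [habs]
    simp only [Set.mem_insert_iff, Set.mem_singleton_iff] at h1 h2
    rcases h1 with h1 | h1 <;> rcases h2 with h2 | h2 <;> rw [h1, h2] <;> norm_num
  calc p[Set.indicator {w : Xa × Xb × (Ya × Yb) × Λ | w.1 ∈ Ja ∧ w.2.1 ∈ Jb} (fun _ => (1:ℝ))|mYL]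
      =ᵐ[p] p[(fun ω => ga ω * gb ω)|mYL] := condExp_congr_ae hprod
    _ = fun ω => ga ω * gb ω := condExp_of_stronglyMeasurable hm hgm hint
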